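/- In the noisy truth-seeking model where all agents are mutual neighbors and noise is bounded by $\delta$, if at some time all truth seekers are within $\delta_1$ of $A$ and all other agents within $\delta_2$ of $A$, with $0 < \delta \leq \underline{\delta}$, then by induction the same bounds hold at all subsequent times: $|x_i(t) - A| \leq \delta_1$ for $i \in S$ and $|x_j(t) - A| \leq \delta_2$ for $j \notin S$, for all $t \geq T$. -/
import Mathlib

private lemma clip_abs_le (A y : ℝ) (h0 : 0 ≤ A) (h1 : A ≤ 1) :
    |min 1 (max 0 y) - A| ≤ |y - A| := by
  rcases le_total y 0 with h | h
  · rw [max_eq_left h, min_eq_right zero_le_one,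
      abs_of_nonpos (by linarith), abs_of_nonpos (by linarith)]
    linarith
  · rcases le_total 1 y with h' | h'
    · rw [max_eq_right h, min_eq_left h',
        abs_of_nonneg (by linarith), abs_of_nonneg (by linarith)]
      linarith
    · rw [max_eq_right h, min_eq_right h']

theorem lemma2_invariance (n m : ℕ) (hn : 1 ≤ n) (hm : 1 ≤ m) (hmn : m ≤ n)
    (S : Finset (Fin n)) (hS : S.card = m)
    (A α ε δ : ℝ) (hA : A ∈ Set.Icc (0 : ℝ) 1)
    (hα : 0 < α) (hα1 : α ≤ 1) (hε : 0 < ε) (hδ : 0 < δ)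
    (hδub : δ ≤ min ((m : ℝ) * α / (2 * n + (2 * m - n) * α) * ε)
        ((m : ℝ) / (n + 2 * m) * ε))
    (δ1 δ2 : ℝ)
    (hδ1 : δ1 = (n : ℝ) * (1 - α) * δ / (m * α) + δ)
    (hδ2 : δ2 = (n : ℝ) * δ / (m * α) + δ)
    (x : ℕ → Fin n → ℝ) (ξ : ℕ → Fin n → ℝ)
    (hξ : ∀ t i, ξ t i ∈ Set.Icc (-δ) δ)
    (hmodel : ∀ t i,
      x (t + 1) i =
        min 1 (max 0
          ((1 - α * (if i ∈ S then 1 else 0)) *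
              ((∑ j ∈ Finset.univ.filter (fun j => |x t j - x t i| ≤ ε), x t j) /
                (Finset.univ.filter (fun j => |x t j - x t i| ≤ ε)).card)
            + α * (if i ∈ S then 1 else 0) * A + ξ (t + 1) i)))
    (T : ℕ)
    (hTS : ∀ i ∈ S, |x T i - A| ≤ δ1)
    (hTSc : ∀ i ∉ S, |x T i - A| ≤ δ2) :
    ∀ t, T ≤ t → (∀ i ∈ S, |x t i - A| ≤ δ1) ∧ (∀ i ∉ S, |x t i - A| ≤ δ2) := by
  have hm0 : (0:ℝ) < m := by exact_mod_cast hm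
  have hn0 : (0:ℝ) < n := by exact_mod_cast hn
  have hmnR : (m:ℝ) ≤ n := by exact_mod_cast hmn
  have hmα : (0:ℝ) < (m:ℝ) * α := mul_pos hm0 hα
  set K : ℝ := (n:ℝ) * δ / ((m:ℝ) * α) with hKdef
  have hK : (m:ℝ) * α * K = (n:ℝ) * δ := by
    rw [hKdef]; field_simp
  have hδ1K : δ1 = (1 - α) * K + δ := by rw [hδ1, hKdef]; ring
  have hδ2K : δ2 = K + δ := by rw [hδ2, hKdef]
  have hK0 : 0 ≤ K := by positivity
  have hδ1le2 : δ1 ≤ δ2 := by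
    rw [hδ1K, hδ2K]
    nlinarith [mul_nonneg hα.le hK0]
  have hden : (0:ℝ) < 2 * n + (2 * (m:ℝ) - n) * α := by nlinarith
  have h1 : δ * (2 * n + (2 * (m:ℝ) - n) * α) ≤ (m:ℝ) * α * ε := by
    have h := le_trans hδub (min_le_left _ _)
    rw [div_mul_eq_mul_div, le_div_iff₀ hden] at h
    linarith
  have hsum : δ1 + δ2 ≤ ε := by
    rw [hδ1K, hδ2K]
    nlinarith [hK, hmα]
  intro t ht
  obtain ⟨k, rfl⟩ : ∃ k, t = T + k := ⟨t - T, by omega⟩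
  clear ht
  induction k with
  | zero => exact ⟨hTS, hTSc⟩
  | succ k ih =>
    obtain ⟨ihS, ihSc⟩ := ih
    have hall : ∀ j, |x (T + k) j - A| ≤ δ2 := by
      intro j
      by_cases hj : j ∈ S
      · exact le_trans (ihS j hj) hδ1le2
      · exact ihSc j hj
    have key : ∀ i : Fin n,
        |(∑ j ∈ Finset.univ.filter (fun j => |x (T+k) j - x (T+k) i| ≤ ε), x (T+k) j) /
          ((Finset.univ.filter (fun j => |x (T+k) j - x (T+k) i| ≤ ε)).card : ℝ) - A| ≤ K := by
      intro i
      set N := Finset.univ.filter (fun j => |x (T+k) j - x (T+k) i| ≤ ε) with hN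
      have hSN : S ⊆ N := by
        intro j hj
        simp only [hN, Finset.mem_filter, Finset.mem_univ, true_and]
        calc |x (T+k) j - x (T+k) i| ≤ |x (T+k) j - A| + |A - x (T+k) i| := abs_sub_le _ _ _
          _ = |x (T+k) j - A| + |x (T+k) i - A| := by rw [abs_sub_comm A]
          _ ≤ δ1 + δ2 := add_le_add (ihS j hj) (hall i)
          _ ≤ ε := hsum
      have hcard_m : m ≤ N.card := by rw [← hS]; exact Finset.card_le_card hSN
      have hcard_n : N.card ≤ n := by simpa using Finset.card_le_univ N
      have hc0 : 0 < N.card := lt_of_lt_of_le hm hcard_m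
      have hc0R : (0:ℝ) < (N.card : ℝ) := by exact_mod_cast hc0
      have hcmR : (m:ℝ) ≤ (N.card : ℝ) := by exact_mod_cast hcard_m
      have hcnR : ((N.card : ℝ)) ≤ n := by exact_mod_cast hcard_n
      have hsplit : ∑ j ∈ N, |x (T+k) j - A| ≤ (m:ℝ) * δ1 + ((N.card : ℝ) - m) * δ2 := by
        rw [← Finset.sum_sdiff hSN]
        have ha : ∑ j ∈ S, |x (T+k) j - A| ≤ (m:ℝ) * δ1 := by
          calc ∑ j ∈ S, |x (T+k) j - A| ≤ ∑ _j ∈ S, δ1 :=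
                Finset.sum_le_sum (fun j hj => ihS j hj)
            _ = (m:ℝ) * δ1 := by rw [Finset.sum_const, hS, nsmul_eq_mul]
        have hb : ∑ j ∈ N \ S, |x (T+k) j - A| ≤ ((N.card : ℝ) - m) * δ2 := by
          calc ∑ j ∈ N \ S, |x (T+k) j - A| ≤ ∑ _j ∈ N \ S, δ2 :=
                Finset.sum_le_sum (fun j _ => hall j)
            _ = ((N.card : ℝ) - m) * δ2 := by
                rw [Finset.sum_const, nsmul_eq_mul, Finset.card_sdiff_of_subset hSN, hS,
                  Nat.cast_sub hcard_m]
        linarith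
      have habs : |∑ j ∈ N, (x (T+k) j - A)| ≤ (N.card : ℝ) * K := by
        calc |∑ j ∈ N, (x (T+k) j - A)| ≤ ∑ j ∈ N, |x (T+k) j - A| :=
              Finset.abs_sum_le_sum_abs _ _
          _ ≤ (m:ℝ) * δ1 + ((N.card:ℝ) - m) * δ2 := hsplit
          _ ≤ (N.card : ℝ) * K := by
              rw [hδ1K, hδ2K]
              nlinarith [hK, mul_nonneg (sub_nonneg.mpr hcnR) hδ.le]
      have heq : (∑ j ∈ N, x (T+k) j) / (N.card : ℝ) - A
          = (∑ j ∈ N, (x (T+k) j - A)) / (N.card : ℝ) := by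
        rw [Finset.sum_sub_distrib, Finset.sum_const, nsmul_eq_mul]
        field_simp
      rw [heq, abs_div, abs_of_nonneg hc0R.le, div_le_iff₀ hc0R]
      exact le_of_le_of_eq habs (mul_comm _ _)
    have hclip := fun (y : ℝ) => clip_abs_le A y hA.1 hA.2
    refine ⟨?_, ?_⟩
    · intro i hi
      have hmod := hmodel (T + k) i
      rw [if_pos hi] at hmod
      show |x ((T+k)+1) i - A| ≤ δ1
      rw [hmod]
      refine le_trans (hclip _) ?_
      obtain ⟨hξl, hξu⟩ := hξ ((T+k)+1) i
      have hξa : |ξ ((T+k)+1) i| ≤ δ := abs_le.mpr ⟨hξl, hξu⟩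
      have havg := key i
      set avg := (∑ j ∈ Finset.univ.filter (fun j => |x (T+k) j - x (T+k) i| ≤ ε), x (T+k) j) /
          ((Finset.univ.filter (fun j => |x (T+k) j - x (T+k) i| ≤ ε)).card : ℝ) with havgdef
      calc |(1 - α * 1) * avg + α * 1 * A + ξ ((T+k)+1) i - A|
          = |(1 - α) * (avg - A) + ξ ((T+k)+1) i| := by congr 1; ring
        _ ≤ |(1 - α) * (avg - A)| + |ξ ((T+k)+1) i| := abs_add_le _ _
        _ ≤ (1 - α) * K + δ := by
            rw [abs_mul, abs_of_nonneg (by linarith : (0:ℝ) ≤ 1 - α)]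
            have := mul_le_mul_of_nonneg_left havg (by linarith : (0:ℝ) ≤ 1 - α)
            linarith
        _ = δ1 := hδ1K.symm
    · intro i hi
      have hmod := hmodel (T + k) i
      rw [if_neg hi] at hmod
      show |x ((T+k)+1) i - A| ≤ δ2
      rw [hmod]
      refine le_trans (hclip _) ?_
      obtain ⟨hξl, hξu⟩ := hξ ((T+k)+1) i
      have hξa : |ξ ((T+k)+1) i| ≤ δ := abs_le.mpr ⟨hξl, hξu⟩
      have havg := key i
      set avg := (∑ j ∈ Finset.univ.filter (fun j => |x (T+k) j - x (T+k) i| ≤ ε), x (T+k) j) /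
          ((Finset.univ.filter (fun j => |x (T+k) j - x (T+k) i| ≤ ε)).card : ℝ) with havgdef
      calc |(1 - α * 0) * avg + α * 0 * A + ξ ((T+k)+1) i - A|
          = |(avg - A) + ξ ((T+k)+1) i| := by congr 1; ring
        _ ≤ |avg - A| + |ξ ((T+k)+1) i| := abs_add_le _ _
        _ ≤ K + δ := add_le_add havg hξa
        _ = δ2 := hδ2K.symm
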